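/- Let ℒ = T + Σ_{s≥0} w_s T^{−s}, Φ = 1 + Σ_{s≥1} φ_s(x)T^{−s} its wave operator with ψ = Φk^x, and ψ⁺ = k^{−x}Φ^{−1}. Then the coefficients of the expansion ψ⁺ψ = 1 + Σ_{s≥1} J_s k^{−s} satisfy J_n = res_T ℒⁿ for all n ≥ 1. -/

import Mathlib

/-!
STATEMENT 14: Let ℒ = T + Σ_{s≥0} w_s T^{−s}, Φ = 1 + Σ_{s≥1} φ_s(x)T^{−s} its wave
operator with ψ = Φk^x, and ψ⁺ = k^{−x}Φ^{−1}.  Then the coefficients of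
ψ⁺ψ = 1 + Σ_{s≥1} J_s k^{−s} satisfy J_n = res_T ℒⁿ for all n ≥ 1.

Pseudodifference operators `(N, c)` represent `Σ c s T^{N−s}`; `ψ⁺ψ` is the product
of the right symbol of Φ^{−1} (from (fT) = T^{−1}f) and the left symbol of Φ, and
ℒ = Φ ∘ T ∘ Φ^{−1}.  `res_T` is the T⁰-coefficient.
-/

noncomputable section

def PdO : Type := ℤ × (ℕ → (ℂ → ℂ))

namespace PdO

def coeffAt (A : PdO) (n : ℤ) : ℂ → ℂ :=
  if n ≤ A.1 then A.2 (A.1 - n).toNat else 0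

def mul (A B : PdO) : PdO :=
  (A.1 + B.1, fun t x => ∑ s ∈ Finset.range (t + 1),
    A.2 s x * B.2 (t - s) (x + ((A.1 - s : ℤ) : ℂ)))

def one : PdO := (0, fun s => if s = 0 then (fun _ => 1) else 0)

def T : PdO := (1, fun s => if s = 0 then (fun _ => 1) else 0)

def pow (A : PdO) (n : ℕ) : PdO := (mul A)^[n] one

def rightSym (A : PdO) : PdO :=
  (A.1, fun t x => A.2 t (x - ((A.1 - t : ℤ) : ℂ)))

def smul (A B : PdO) : PdO :=
  (A.1 + B.1, fun t x => ∑ s ∈ Finset.range (t + 1), A.2 s x * B.2 (t - s) x)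

def res (A : PdO) : ℂ → ℂ := coeffAt A 0

end PdO

open PdO Finset

lemma sum_interchange (t : ℕ) (F : ℕ → ℕ → ℂ) :
    ∑ s ∈ range (t+1), ∑ u ∈ range (s+1), F u (s-u)
      = ∑ u ∈ range (t+1), ∑ v ∈ range (t-u+1), F u v := by
  rw [Finset.sum_sigma', Finset.sum_sigma']
  apply Finset.sum_nbij' (fun x => (⟨x.2, x.1 - x.2⟩ : Σ _ : ℕ, ℕ))
    (fun y => (⟨y.1 + y.2, y.1⟩ : Σ _ : ℕ, ℕ))
  · intro a ha
    simp only [Finset.mem_sigma, Finset.mem_range] at *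
    omega
  · intro b hb
    simp only [Finset.mem_sigma, Finset.mem_range] at *
    omega
  · intro a ha
    simp only [Finset.mem_sigma, Finset.mem_range] at ha
    obtain ⟨s, u⟩ := a
    simp only at *
    congr 1 <;> omega
  · intro b hb
    simp only [Finset.mem_sigma, Finset.mem_range] at hb
    obtain ⟨u, v⟩ := b
    simp only at *
    congr 1 <;> omega
  · intro a ha
    rfl

lemma pdo_mul_assoc (A B C : PdO) : mul (mul A B) C = mul A (mul B C) := by
  unfold mul
  refine Prod.ext ?_ ?_
  · exact add_assoc _ _ _
  · funext t x
    simp only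
    calc ∑ s ∈ range (t+1),
          (∑ u ∈ range (s+1), A.2 u x * B.2 (s-u) (x + ((A.1 - u : ℤ) : ℂ)))
            * C.2 (t-s) (x + ((A.1 + B.1 - s : ℤ) : ℂ))
        = ∑ s ∈ range (t+1), ∑ u ∈ range (s+1),
            (fun u v => A.2 u x * B.2 v (x + ((A.1 - u : ℤ) : ℂ))
              * C.2 (t - (u+v)) (x + ((A.1 + B.1 - (u+v : ℕ) : ℤ) : ℂ))) u (s-u) := by
          refine Finset.sum_congr rfl fun s hs => ?_
          rw [Finset.sum_mul]
          refine Finset.sum_congr rfl fun u hu => ?_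
          simp only [Finset.mem_range] at hs hu
          have h : u + (s - u) = s := by omega
          simp only [h]
      _ = ∑ u ∈ range (t+1), ∑ v ∈ range (t-u+1),
            A.2 u x * B.2 v (x + ((A.1 - u : ℤ) : ℂ))
              * C.2 (t - (u+v)) (x + ((A.1 + B.1 - (u+v : ℕ) : ℤ) : ℂ)) :=
          sum_interchange t (fun u v => A.2 u x * B.2 v (x + ((A.1 - u : ℤ) : ℂ))
              * C.2 (t - (u+v)) (x + ((A.1 + B.1 - (u+v : ℕ) : ℤ) : ℂ)))
      _ = ∑ u ∈ range (t+1), A.2 u x * ∑ v ∈ range (t-u+1),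
            B.2 v (x + ((A.1 - u : ℤ) : ℂ))
              * C.2 (t-u-v) (x + ((A.1 - u : ℤ) : ℂ) + ((B.1 - v : ℤ) : ℂ)) := by
          refine Finset.sum_congr rfl fun u hu => ?_
          rw [Finset.mul_sum]
          refine Finset.sum_congr rfl fun v hv => ?_
          have h1 : t - u - v = t - (u + v) := by omega
          have h2 : x + ((A.1 - u : ℤ) : ℂ) + ((B.1 - v : ℤ) : ℂ)
              = x + ((A.1 + B.1 - (u+v : ℕ) : ℤ) : ℂ) := by push_cast; ring
          rw [h1, h2, mul_assoc]
      _ = _ := rfl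


lemma mulinv (A B : PdO) (hord : A.1 + B.1 = 0)
    (h : ∀ (n : ℤ) (x : ℂ), coeffAt (mul A B) n x = coeffAt one n x) :
    mul A B = one := by
  refine Prod.ext hord ?_
  funext t x
  have h' := h (-(t : ℤ)) x
  simp only [coeffAt] at h'
  have e1 : (mul A B).1 = 0 := hord
  rw [e1] at h'
  have e2 : (one : PdO).1 = 0 := rfl
  rw [e2] at h'
  simpa using h'


/-- `Φ` the wave operator, `Ψ` its two-sided inverse. -/
theorem stmt14 (Φ Ψ : PdO)
    (hΦord : Φ.1 = 0) (hΦ0 : Φ.2 0 = fun _ => 1)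
    (hΨord : Ψ.1 = 0) (hΨ0 : Ψ.2 0 = fun _ => 1)
    (hinv₁ : ∀ (n : ℤ) (x : ℂ), coeffAt (mul Φ Ψ) n x = coeffAt one n x)
    (hinv₂ : ∀ (n : ℤ) (x : ℂ), coeffAt (mul Ψ Φ) n x = coeffAt one n x) :
    ∀ n : ℕ, 1 ≤ n → ∀ x : ℂ,
      coeffAt (smul (rightSym Ψ) Φ) (-(n : ℤ)) x =
        res (pow (mul (mul Φ T) Ψ) n) x := by
  have hΦΨ : mul Φ Ψ = one := mulinv Φ Ψ (by rw [hΦord, hΨord]; ring) hinv₁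
  have hΨΦ : mul Ψ Φ = one := mulinv Ψ Φ (by rw [hΨord, hΦord]; ring) hinv₂
  have hΦeta : ((0 : ℤ), Φ.2) = Φ := by rw [← hΦord]; exact Prod.mk.eta
  have hΦT : mul Φ T = ((1 : ℤ), Φ.2) := by
    refine Prod.ext (by show Φ.1 + 1 = 1; rw [hΦord]; ring) ?_
    funext t x
    show ∑ s ∈ range (t + 1),
        Φ.2 s x * (if t - s = 0 then (fun _ : ℂ => (1:ℂ)) else (0 : ℂ → ℂ)) (x + ((Φ.1 - s : ℤ) : ℂ))
        = Φ.2 t x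
    rw [Finset.sum_eq_single_of_mem t (self_mem_range_succ t)]
    · simp
    · intro s hs hne
      simp only [Finset.mem_range] at hs
      have : ¬ (t - s = 0) := by omega
      simp [this]
  have key : ∀ n : ℕ, pow (mul (mul Φ T) Ψ) n = mul (((n : ℕ) : ℤ), Φ.2) Ψ := by
    intro n
    induction n with
    | zero =>
        show one = mul (((0:ℕ) : ℤ), Φ.2) Ψ
        rw [show (((0:ℕ):ℤ), Φ.2) = ((0:ℤ), Φ.2) by norm_num, hΦeta, hΦΨ]
    | succ n ih =>
        show (mul (mul (mul Φ T) Ψ))^[n+1] one = _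
        rw [Function.iterate_succ_apply']
        have : (mul (mul (mul Φ T) Ψ))^[n] one = pow (mul (mul Φ T) Ψ) n := rfl
        rw [this, ih, hΦT, pdo_mul_assoc (1, Φ.2) Ψ, ← pdo_mul_assoc Ψ (((n : ℕ) : ℤ), Φ.2) Ψ]
        have hmid : mul Ψ (((n : ℕ) : ℤ), Φ.2) = (((n : ℕ) : ℤ), one.2) := by
          refine Prod.ext (by show Ψ.1 + (n:ℤ) = (n:ℤ); rw [hΨord]; ring) ?_
          show (mul Ψ Φ).2 = one.2
          rw [hΨΦ]
        rw [hmid]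
        have hTn : mul (((n : ℕ) : ℤ), one.2) Ψ
            = (((n : ℕ) : ℤ), fun t x => Ψ.2 t (x + ((n : ℕ) : ℂ))) := by
          refine Prod.ext (by show (n:ℤ) + Ψ.1 = (n:ℤ); rw [hΨord]; ring) ?_
          funext t x
          show ∑ s ∈ range (t + 1),
              (if s = 0 then (fun _ : ℂ => (1:ℂ)) else (0 : ℂ → ℂ)) x
                * Ψ.2 (t - s) (x + (((n : ℕ) : ℤ) - s : ℤ))
              = Ψ.2 t (x + ((n : ℕ) : ℂ))
          rw [Finset.sum_eq_single_of_mem 0 (Finset.mem_range.2 (by omega))]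
          · norm_num
          · intro s hs hne
            simp [hne]
        rw [hTn]
        refine Prod.ext ?_ ?_
        · show (1 : ℤ) + (n : ℤ) = ((n : ℕ) + 1 : ℤ) + Ψ.1
          rw [hΨord]; push_cast; ring
        · funext t x
          show ∑ s ∈ range (t + 1),
              Φ.2 s x * Ψ.2 (t - s) (x + (((1 : ℤ) - s : ℤ) : ℂ) + ((n : ℕ) : ℂ))
              = ∑ s ∈ range (t + 1),
              Φ.2 s x * Ψ.2 (t - s) (x + (((((n:ℕ)+1 : ℕ) : ℤ) - s : ℤ) : ℂ))
          refine Finset.sum_congr rfl fun s _ => ?_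
          have : x + (((1 : ℤ) - s : ℤ) : ℂ) + ((n : ℕ) : ℂ)
              = x + (((((n:ℕ)+1 : ℕ) : ℤ) - s : ℤ) : ℂ) := by push_cast; ring
          rw [this]
  intro n hn x
  rw [key n]
  have hL : coeffAt (smul (rightSym Ψ) Φ) (-(n : ℤ)) x
      = ∑ s ∈ range (n + 1), Ψ.2 s (x + (s : ℂ)) * Φ.2 (n - s) x := by
    have e1 : (smul (rightSym Ψ) Φ).1 = 0 := by
      show Ψ.1 + Φ.1 = 0; rw [hΨord, hΦord]; ring
    simp only [coeffAt, e1]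
    rw [if_pos (by omega)]
    have e2 : ((0 : ℤ) - -(n:ℤ)).toNat = n := by omega
    rw [e2]
    show ∑ s ∈ range (n + 1), Ψ.2 s (x - ((Ψ.1 - s : ℤ) : ℂ)) * Φ.2 (n - s) x = _
    refine Finset.sum_congr rfl fun s _ => ?_
    have : x - ((Ψ.1 - s : ℤ) : ℂ) = x + (s : ℂ) := by rw [hΨord]; push_cast; ring
    rw [this]
  have hR : res (mul (((n : ℕ) : ℤ), Φ.2) Ψ) x
      = ∑ s ∈ range (n + 1), Φ.2 s x * Ψ.2 (n - s) (x + (((n : ℤ) - s : ℤ) : ℂ)) := by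
    have e1 : (mul (((n : ℕ) : ℤ), Φ.2) Ψ).1 = (n : ℤ) := by
      show (n:ℤ) + Ψ.1 = (n:ℤ); rw [hΨord]; ring
    simp only [res, coeffAt, e1]
    rw [if_pos (by omega)]
    have e2 : ((n : ℤ) - 0).toNat = n := by omega
    rw [e2]
    rfl
  rw [hL, hR]
  rw [← Finset.sum_range_reflect (fun s => Φ.2 s x * Ψ.2 (n - s) (x + (((n : ℤ) - s : ℤ) : ℂ))) (n+1)]
  refine Finset.sum_congr rfl fun s hs => ?_
  simp only [Finset.mem_range] at hs
  have e3 : n + 1 - 1 - s = n - s := by omega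
  have e4 : n - (n - s) = s := by omega
  have e5 : ((n : ℤ) - ((n - s : ℕ) : ℤ)) = (s : ℤ) := by
    have : ((n - s : ℕ) : ℤ) = (n : ℤ) - s := by omega
    rw [this]; ring
  simp only [e3, e4]
  rw [show ((((n : ℤ) - ((n - s : ℕ)) : ℤ)) : ℂ) = (s : ℂ) by rw [e5]; norm_num]
  ring
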